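/- Suppose the single-sample loss c and the activation σ are C² (twice continuously differentiable), and let θ*^r be an irreducible critical point of the width-r training loss L^r. Then for every point θ*^m in the set of symmetry-induced critical points Θ̄_{r→m}(θ*^r), the Hessian ∇²L^m(θ*^m) has at least (m − r) zero eigenvalues; equivalently, the kernel of ∇²L^m(θ*^m) has dimension at least m − r. -/

import Mathlib

/-- The parameter space of a width-`m` two-layer network: each neuron `i` carries an
incoming weight vector (the coordinates `(i, Sum.inl k)`) and an outgoing weight
vector (the coordinates `(i, Sum.inr o)`). -/
abbrev NNParam (din dout m : ℕ) := EuclideanSpace ℝ (Fin m × (Fin din ⊕ Fin dout))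

/-- The incoming weight vector of neuron `i`. -/
def wOf {din dout m : ℕ} (θ : NNParam din dout m) (i : Fin m) : Fin din → ℝ :=
  fun k => θ (i, Sum.inl k)

/-- The outgoing weight vector of neuron `i`. -/
def aOf {din dout m : ℕ} (θ : NNParam din dout m) (i : Fin m) : Fin dout → ℝ :=
  fun o => θ (i, Sum.inr o)

/-- The training loss `L^m(θ) = (1/N) ∑_{(x,y) ∈ Trn} c(f⁽²⁾(x|θ), y)` of the
two-layer network `f⁽²⁾(x|θ) = ∑ i, a_i σ(w_i · x)` of width `m`. -/
noncomputable def nnLoss {din dout : ℕ} (σ : ℝ → ℝ)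
    (c : (Fin dout → ℝ) → (Fin dout → ℝ) → ℝ)
    {N : ℕ} (x : Fin N → Fin din → ℝ) (y : Fin N → Fin dout → ℝ)
    (m : ℕ) (θ : NNParam din dout m) : ℝ :=
  (1 / N : ℝ) * ∑ n, c (fun o => ∑ i, aOf θ i o * σ (∑ k, wOf θ i k * x n k)) (y n)

/-- A point is irreducible if its incoming weight vectors are pairwise distinct
and no outgoing weight vector is zero. -/
def Irreducible' {din dout m : ℕ} (θ : NNParam din dout m) : Prop :=
  Function.Injective (wOf θ) ∧ ∀ i, aOf θ i ≠ 0

/-- Membership of a width-`m` point `θm` in the set of symmetry-induced critical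
points `Θ̄_{r→m}(θr)`, i.e. `⋃_{s, π ∈ S_m} P_π Γ̄_s(θr)`: there is a surjective
grouping map `g : Fin m → Fin r` (surjectivity encodes `k_t ≥ 1`) and coefficients
`β i` with, for each group `t`, `∑_{g i = t} β i = 1`, such that neuron `i` of `θm`
has incoming weight `w*_{g i}` and outgoing weight `β i • a*_{g i}`. -/
def InSymmetryInducedSet {din dout r m : ℕ}
    (θr : NNParam din dout r) (θm : NNParam din dout m) : Prop :=
  ∃ (g : Fin m → Fin r) (β : Fin m → ℝ),
    Function.Surjective g ∧
    (∀ i, wOf θm i = wOf θr (g i)) ∧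
    (∀ i, aOf θm i = β i • aOf θr (g i)) ∧
    (∀ t : Fin r, ∑ i ∈ Finset.univ.filter (fun i => g i = t), β i = 1)


section NNAuxSection
open Finset
namespace NNAux

variable {din dout N : ℕ} (σ : ℝ → ℝ) (c : (Fin dout → ℝ) → (Fin dout → ℝ) → ℝ)
  (x : Fin N → Fin din → ℝ) (y : Fin N → Fin dout → ℝ)

/-- feature map -/
def feat (m : ℕ) (θ : NNParam din dout m) (n : Fin N) : Fin dout → ℝ :=
  fun o => ∑ i, aOf θ i o * σ (∑ k, wOf θ i k * x n k)

lemma nnLoss_eq (m : ℕ) (θ : NNParam din dout m) :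
    nnLoss σ c x y m θ = (1 / N : ℝ) * ∑ n, c (feat σ x m θ n) (y n) := rfl

lemma contDiff_coord (m : ℕ) (p : Fin m × (Fin din ⊕ Fin dout)) :
    ContDiff ℝ 2 (fun θ : NNParam din dout m => θ p) :=
  (EuclideanSpace.proj (𝕜 := ℝ) p).contDiff

lemma contDiff_feat (hσ : ContDiff ℝ 2 σ) (m : ℕ) (n : Fin N) (o : Fin dout) :
    ContDiff ℝ 2 (fun θ : NNParam din dout m => ∑ i, aOf θ i o * σ (∑ k, wOf θ i k * x n k)) := by
  refine ContDiff.sum fun i _ => ?_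
  exact (contDiff_coord m (i, Sum.inr o)).mul
    (hσ.comp (ContDiff.sum fun k _ => (contDiff_coord m (i, Sum.inl k)).mul contDiff_const))

lemma contDiff_nnLoss (hσ : ContDiff ℝ 2 σ) (hc : ∀ yv, ContDiff ℝ 2 (fun v => c v yv))
    (m : ℕ) : ContDiff ℝ 2 (nnLoss σ c x y m) := by
  refine contDiff_const.mul (ContDiff.sum fun n _ => ?_)
  exact (hc (y n)).comp (contDiff_pi.mpr fun o => contDiff_feat σ x hσ m n o)

/-- explicit directional derivative of the loss -/
noncomputable def nnE (m : ℕ) (θ u : NNParam din dout m) : ℝ :=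
  (1 / N : ℝ) * ∑ n, (fderiv ℝ (fun v => c v (y n)) (feat σ x m θ n))
    (fun o => ∑ i, (aOf u i o * σ (∑ k, wOf θ i k * x n k)
      + aOf θ i o * (deriv σ (∑ k, wOf θ i k * x n k) * (∑ k, wOf u i k * x n k))))

lemma wOf_line (m : ℕ) (θ u : NNParam din dout m) (t : ℝ) (i : Fin m) (k : Fin din) :
    wOf (θ + t • u) i k = wOf θ i k + t * wOf u i k := by
  simp [wOf, PiLp.add_apply, PiLp.smul_apply, smul_eq_mul]

lemma aOf_line (m : ℕ) (θ u : NNParam din dout m) (t : ℝ) (i : Fin m) (o : Fin dout) :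
    aOf (θ + t • u) i o = aOf θ i o + t * aOf u i o := by
  simp [aOf, PiLp.add_apply, PiLp.smul_apply, smul_eq_mul]

lemma oneD {σ : ℝ → ℝ} (hσd : Differentiable ℝ σ) (A B S T : ℝ) :
    HasDerivAt (fun t : ℝ => (A + t * B) * σ (S + t * T))
      (B * σ S + A * (deriv σ S * T)) 0 := by
  have h1 : HasDerivAt (fun t : ℝ => A + t * B) B 0 := by
    simpa using (hasDerivAt_mul_const (x := (0:ℝ)) B).const_add A
  have h2 : HasDerivAt (fun t : ℝ => S + t * T) T 0 := by
    simpa using (hasDerivAt_mul_const (x := (0:ℝ)) T).const_add S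
  have h3 : HasDerivAt σ (deriv σ S) S := (hσd S).hasDerivAt
  have h4 : HasDerivAt (fun t : ℝ => σ (S + t * T)) (deriv σ S * T) 0 := by
    have h3' : HasDerivAt σ (deriv σ S) ((fun t : ℝ => S + t * T) 0) := by simpa using h3
    exact h3'.comp 0 h2
  have h5 : HasDerivAt (fun t : ℝ => (A + t * B) * σ (S + t * T))
      (B * σ (S + 0 * T) + (A + 0 * B) * (deriv σ S * T)) 0 := h1.mul h4
  simpa using h5

lemma hasDerivAt_line (hσ : ContDiff ℝ 2 σ) (hc : ∀ yv, ContDiff ℝ 2 (fun v => c v yv))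
    (m : ℕ) (θ u : NNParam din dout m) :
    HasDerivAt (fun t : ℝ => nnLoss σ c x y m (θ + t • u)) (nnE σ c x y m θ u) 0 := by
  have hσd : Differentiable ℝ σ := hσ.differentiable (by norm_num)
  simp only [nnLoss_eq, nnE]
  refine HasDerivAt.const_mul _ (HasDerivAt.fun_sum fun n _ => ?_)
  have hΦ : HasDerivAt
      (fun t : ℝ => feat σ x m (θ + t • u) n)
      (fun o => ∑ i, (aOf u i o * σ (∑ k, wOf θ i k * x n k)
        + aOf θ i o * (deriv σ (∑ k, wOf θ i k * x n k) * (∑ k, wOf u i k * x n k)))) 0 := by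
    rw [hasDerivAt_pi]
    intro o
    refine HasDerivAt.fun_sum fun i _ => ?_
    have hfun : (fun t : ℝ => aOf (θ + t • u) i o * σ (∑ k, wOf (θ + t • u) i k * x n k))
        = fun t : ℝ => (aOf θ i o + t * aOf u i o) *
            σ ((∑ k, wOf θ i k * x n k) + t * (∑ k, wOf u i k * x n k)) := by
      funext t
      rw [aOf_line]
      congr 2
      simp only [wOf_line, add_mul, mul_assoc]
      rw [Finset.sum_add_distrib, ← Finset.mul_sum]
    exact hfun ▸ oneD hσd _ _ _ _
  have hcd : HasFDerivAt (fun v => c v (y n))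
      (fderiv ℝ (fun v => c v (y n)) (feat σ x m θ n)) (feat σ x m (θ + (0:ℝ) • u) n) := by
    have : feat σ x m (θ + (0:ℝ) • u) n = feat σ x m θ n := by simp
    rw [this]
    exact (((hc (y n)).differentiable (by norm_num)) _).hasFDerivAt
  exact hcd.comp_hasDerivAt 0 hΦ

lemma fderiv_nnLoss_apply (hσ : ContDiff ℝ 2 σ) (hc : ∀ yv, ContDiff ℝ 2 (fun v => c v yv))
    (m : ℕ) (θ u : NNParam din dout m) :
    (fderiv ℝ (nnLoss σ c x y m) θ) u = nnE σ c x y m θ u := by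
  have hL : HasFDerivAt (nnLoss σ c x y m) (fderiv ℝ (nnLoss σ c x y m) θ) (θ + (0:ℝ) • u) := by
    have h0 : θ + (0:ℝ) • u = θ := by simp
    rw [h0]
    exact (((contDiff_nnLoss σ c x y hσ hc m).differentiable (by norm_num)) θ).hasFDerivAt
  have hline : HasDerivAt (fun t : ℝ => θ + t • u) u 0 := by
    simpa using ((hasDerivAt_id (0:ℝ)).smul_const u).const_add θ
  have h1 := hL.comp_hasDerivAt 0 hline
  exact h1.unique (hasDerivAt_line σ c x y hσ hc m θ u)

end NNAux

namespace NNAux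
variable {din dout N : ℕ} (σ : ℝ → ℝ) (c : (Fin dout → ℝ) → (Fin dout → ℝ) → ℝ)
  (x : Fin N → Fin din → ℝ) (y : Fin N → Fin dout → ℝ)

def mkParam {din dout m : ℕ} (f : Fin m × (Fin din ⊕ Fin dout) → ℝ) : NNParam din dout m := WithLp.toLp 2 f

/-- push a width-`m` tangent vector down to width `r` -/
def groupDown {r m : ℕ} (g : Fin m → Fin r) (β : Fin m → ℝ) (u : NNParam din dout m) :
    NNParam din dout r :=
  mkParam fun p => Sum.elim
    (fun k => ∑ i ∈ univ.filter (fun i => g i = p.1), β i * wOf u i k)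
    (fun o => ∑ i ∈ univ.filter (fun i => g i = p.1), aOf u i o) p.2

lemma wOf_groupDown {r m : ℕ} (g : Fin m → Fin r) (β : Fin m → ℝ) (u : NNParam din dout m)
    (t : Fin r) (k : Fin din) :
    wOf (groupDown g β u) t k = ∑ i ∈ univ.filter (fun i => g i = t), β i * wOf u i k := rfl

lemma aOf_groupDown {r m : ℕ} (g : Fin m → Fin r) (β : Fin m → ℝ) (u : NNParam din dout m)
    (t : Fin r) (o : Fin dout) :
    aOf (groupDown g β u) t o = ∑ i ∈ univ.filter (fun i => g i = t), aOf u i o := rfl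

variable {r m : ℕ} {θr : NNParam din dout r} {θ' : NNParam din dout m}
  {g : Fin m → Fin r} {β : Fin m → ℝ}

lemma feat_eq (hw : ∀ i, wOf θ' i = wOf θr (g i)) (ha : ∀ i, aOf θ' i = β i • aOf θr (g i))
    (hβ : ∀ t : Fin r, ∑ i ∈ Finset.univ.filter (fun i => g i = t), β i = 1) (n : Fin N) :
    feat σ x m θ' n = feat σ x r θr n := by
  funext o
  have h1 : feat σ x m θ' n o
      = ∑ i, β i * (aOf θr (g i) o * σ (∑ k, wOf θr (g i) k * x n k)) := by
    refine Finset.sum_congr rfl fun i _ => ?_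
    rw [hw i, ha i]
    simp only [Pi.smul_apply, smul_eq_mul]
    ring
  rw [h1, ← Finset.sum_fiberwise univ g (fun i => β i * (aOf θr (g i) o * σ (∑ k, wOf θr (g i) k * x n k)))]
  refine Finset.sum_congr rfl fun t _ => ?_
  have h2 : ∑ i ∈ univ.filter (fun i => g i = t), β i * (aOf θr (g i) o * σ (∑ k, wOf θr (g i) k * x n k))
      = ∑ i ∈ univ.filter (fun i => g i = t), β i * (aOf θr t o * σ (∑ k, wOf θr t k * x n k)) := by
    refine Finset.sum_congr rfl fun i hi => ?_
    rw [(Finset.mem_filter.mp hi).2]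
  rw [h2, ← Finset.sum_mul, hβ t, one_mul]

lemma vec_eq (hw : ∀ i, wOf θ' i = wOf θr (g i)) (ha : ∀ i, aOf θ' i = β i • aOf θr (g i))
    (n : Fin N) (u : NNParam din dout m) (o : Fin dout) :
    ∑ i, (aOf u i o * σ (∑ k, wOf θ' i k * x n k)
        + aOf θ' i o * (deriv σ (∑ k, wOf θ' i k * x n k) * (∑ k, wOf u i k * x n k)))
    = ∑ t, (aOf (groupDown g β u) t o * σ (∑ k, wOf θr t k * x n k)
        + aOf θr t o * (deriv σ (∑ k, wOf θr t k * x n k) * (∑ k, wOf (groupDown g β u) t k * x n k))) := by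
  have hLHS : ∑ i, (aOf u i o * σ (∑ k, wOf θ' i k * x n k)
        + aOf θ' i o * (deriv σ (∑ k, wOf θ' i k * x n k) * (∑ k, wOf u i k * x n k)))
      = ∑ i, (aOf u i o * σ (∑ k, wOf θr (g i) k * x n k)
        + aOf θr (g i) o * (deriv σ (∑ k, wOf θr (g i) k * x n k) * (β i * (∑ k, wOf u i k * x n k)))) := by
    refine Finset.sum_congr rfl fun i _ => ?_
    rw [hw i, ha i]
    simp only [Pi.smul_apply, smul_eq_mul]
    ring
  rw [hLHS, ← Finset.sum_fiberwise univ g (fun i => aOf u i o * σ (∑ k, wOf θr (g i) k * x n k)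
        + aOf θr (g i) o * (deriv σ (∑ k, wOf θr (g i) k * x n k) * (β i * (∑ k, wOf u i k * x n k))))]
  refine Finset.sum_congr rfl fun t _ => ?_
  have hsw : ∑ k, wOf (groupDown g β u) t k * x n k
      = ∑ i ∈ univ.filter (fun i => g i = t), β i * (∑ k, wOf u i k * x n k) := by
    simp only [wOf_groupDown, Finset.sum_mul]
    rw [Finset.sum_comm]
    refine Finset.sum_congr rfl fun i _ => ?_
    rw [Finset.mul_sum]
    exact Finset.sum_congr rfl fun k _ => by ring
  rw [hsw, aOf_groupDown, Finset.sum_mul, Finset.mul_sum, Finset.mul_sum, ← Finset.sum_add_distrib]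
  refine Finset.sum_congr rfl fun i hi => ?_
  rw [(Finset.mem_filter.mp hi).2]

lemma nnE_eq_down (hw : ∀ i, wOf θ' i = wOf θr (g i)) (ha : ∀ i, aOf θ' i = β i • aOf θr (g i))
    (hβ : ∀ t : Fin r, ∑ i ∈ Finset.univ.filter (fun i => g i = t), β i = 1)
    (u : NNParam din dout m) :
    nnE σ c x y m θ' u = nnE σ c x y r θr (groupDown g β u) := by
  unfold nnE
  congr 1
  refine Finset.sum_congr rfl fun n _ => ?_
  rw [feat_eq σ x hw ha hβ n]
  congr 1
  funext o
  exact vec_eq σ x hw ha n u o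

lemma gradient_zero_on_subspace (hσ : ContDiff ℝ 2 σ)
    (hc : ∀ yv, ContDiff ℝ 2 (fun v => c v yv))
    (hw : ∀ i, wOf θ' i = wOf θr (g i)) (ha : ∀ i, aOf θ' i = β i • aOf θr (g i))
    (hβ : ∀ t : Fin r, ∑ i ∈ Finset.univ.filter (fun i => g i = t), β i = 1)
    (hcrit : gradient (nnLoss σ c x y r) θr = 0) :
    gradient (nnLoss σ c x y m) θ' = 0 := by
  have hfr : fderiv ℝ (nnLoss σ c x y r) θr = 0 := by
    have h := congrArg (InnerProductSpace.toDual ℝ (NNParam din dout r)) hcrit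
    have hg : gradient (nnLoss σ c x y r) θr
        = (InnerProductSpace.toDual ℝ (NNParam din dout r)).symm
          (fderiv ℝ (nnLoss σ c x y r) θr) := rfl
    rw [hg] at h
    simpa using h
  have hfm : fderiv ℝ (nnLoss σ c x y m) θ' = 0 := by
    refine ContinuousLinearMap.ext fun u => ?_
    rw [fderiv_nnLoss_apply σ c x y hσ hc m θ' u,
      nnE_eq_down σ c x y hw ha hβ u,
      ← fderiv_nnLoss_apply σ c x y hσ hc r θr (groupDown g β u), hfr]
    simp
  have hg : gradient (nnLoss σ c x y m) θ'
      = (InnerProductSpace.toDual ℝ (NNParam din dout m)).symm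
        (fderiv ℝ (nnLoss σ c x y m) θ') := rfl
  rw [hg, hfm]
  simp

end NNAux

end NNAuxSection

/-- Suppose `c` and `σ` are C² and `θr` is an irreducible critical
point of the width-`r` training loss. Then at every symmetry-induced critical point
`θm ∈ Θ̄_{r→m}(θr)`, the Hessian `∇²L^m(θm) = D(∇L^m)(θm)` has at least `m - r` zero
eigenvalues: its kernel has dimension at least `m - r`. -/
theorem symmetryInduced_hessian_kernel_dim
    {din dout r m N : ℕ} (hN : 0 < N)
    (σ : ℝ → ℝ) (hσ : ContDiff ℝ 2 σ)
    (c : (Fin dout → ℝ) → (Fin dout → ℝ) → ℝ)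
    (hc0 : ∀ v yv, 0 ≤ c v yv)
    (hceq : ∀ v yv, c v yv = 0 ↔ v = yv)
    (hcC2 : ∀ yv, ContDiff ℝ 2 (fun v => c v yv))
    (x : Fin N → Fin din → ℝ) (y : Fin N → Fin dout → ℝ)
    (θr : NNParam din dout r)
    (hirr : Irreducible' θr)
    (hcrit : gradient (nnLoss σ c x y r) θr = 0)
    (θm : NNParam din dout m)
    (hmem : InSymmetryInducedSet θr θm) :
    m - r ≤ Module.finrank ℝ
      (LinearMap.ker ((fderiv ℝ (gradient (nnLoss σ c x y m)) θm :
        NNParam din dout m →ₗ[ℝ] NNParam din dout m))) := by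
  classical
  obtain ⟨g, β, hgsurj, hw, ha, hβ⟩ := hmem
  -- the linear map sending γ to the tangent direction (0, γ i • a*_{g i})
  set Jfun : (Fin m → ℝ) → NNParam din dout m := fun γ =>
    NNAux.mkParam fun p => Sum.elim (fun _ => (0:ℝ)) (fun o => γ p.1 * aOf θr (g p.1) o) p.2 with hJfun
  have hJadd : ∀ γ γ', Jfun (γ + γ') = Jfun γ + Jfun γ' := by
    intro γ γ'
    ext p
    obtain ⟨i, j⟩ := p
    cases j <;> simp [hJfun, NNAux.mkParam, PiLp.add_apply, add_mul, Pi.add_apply]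
  have hJsmul : ∀ (t : ℝ) γ, Jfun (t • γ) = t • Jfun γ := by
    intro t γ
    ext p
    obtain ⟨i, j⟩ := p
    cases j <;> simp [hJfun, NNAux.mkParam, PiLp.smul_apply, smul_eq_mul, mul_assoc]
  set Jmap : (Fin m → ℝ) →ₗ[ℝ] NNParam din dout m :=
    { toFun := Jfun, map_add' := hJadd, map_smul' := hJsmul } with hJmap
  -- the fiberwise-summation map
  set Ssum : (Fin m → ℝ) →ₗ[ℝ] (Fin r → ℝ) :=
    { toFun := fun γ t => ∑ i ∈ Finset.univ.filter (fun i => g i = t), γ i,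
      map_add' := by intro γ γ'; funext t; simp [Finset.sum_add_distrib],
      map_smul' := by intro s γ; funext t; simp [Finset.mul_sum] } with hSsum
  -- basic coordinate facts about Jfun
  have hJw : ∀ γ (i : Fin m) (k : Fin din), wOf (Jfun γ) i k = 0 := fun γ i k => rfl
  have hJa : ∀ γ (i : Fin m) (o : Fin dout), aOf (Jfun γ) i o = γ i * aOf θr (g i) o :=
    fun γ i o => rfl
  -- every direction in Jmap '' (ker Ssum) is in the kernel of the Hessian
  have hker : (LinearMap.ker Ssum).map Jmap ≤
      LinearMap.ker ((fderiv ℝ (gradient (nnLoss σ c x y m)) θm :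
        NNParam din dout m →ₗ[ℝ] NNParam din dout m)) := by
    rintro v ⟨γ, hγ, rfl⟩
    have hγ0 : ∀ t : Fin r, ∑ i ∈ Finset.univ.filter (fun i => g i = t), γ i = 0 :=
      fun t => congrFun (LinearMap.mem_ker.mp hγ) t
    -- the whole line θm + t • Jfun γ consists of critical points
    have hlinecrit : ∀ t : ℝ, gradient (nnLoss σ c x y m) (θm + t • Jfun γ) = 0 := by
      intro t
      refine NNAux.gradient_zero_on_subspace σ c x y
        (θr := θr) (θ' := θm + t • Jfun γ) (g := g) (β := fun i => β i + t * γ i)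
        hσ hcC2 ?_ ?_ ?_ hcrit
      · intro i
        funext k
        rw [NNAux.wOf_line, hJw, mul_zero, add_zero, ← hw i]
      · intro i
        funext o
        rw [NNAux.aOf_line, hJa]
        have := congrFun (ha i) o
        simp only [Pi.smul_apply, smul_eq_mul] at this ⊢
        rw [this]; ring
      · intro t'
        rw [Finset.sum_add_distrib, hβ t', ← Finset.mul_sum, hγ0 t', mul_zero, add_zero]
    -- differentiability of the gradient
    have hgradDiff : Differentiable ℝ (gradient (nnLoss σ c x y m)) := by
      have h1 : ContDiff ℝ 1 (fderiv ℝ (nnLoss σ c x y m)) :=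
        (NNAux.contDiff_nnLoss σ c x y hσ hcC2 m).fderiv_right (by norm_num)
      have h2 : gradient (nnLoss σ c x y m) = fun θ =>
          (InnerProductSpace.toDual ℝ (NNParam din dout m)).symm
            (fderiv ℝ (nnLoss σ c x y m) θ) := rfl
      rw [h2]
      exact ((InnerProductSpace.toDual ℝ
        (NNParam din dout m)).symm.toContinuousLinearEquiv.differentiable).comp
        (h1.differentiable one_ne_zero)
    -- compose with the line
    have hline : HasDerivAt (fun t : ℝ => θm + t • Jfun γ) (Jfun γ) 0 := by
      simpa using ((hasDerivAt_id (0:ℝ)).smul_const (Jfun γ)).const_add θm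
    have hF : HasFDerivAt (gradient (nnLoss σ c x y m))
        (fderiv ℝ (gradient (nnLoss σ c x y m)) θm) (θm + (0:ℝ) • Jfun γ) := by
      have h0 : θm + (0:ℝ) • Jfun γ = θm := by simp
      rw [h0]
      exact (hgradDiff θm).hasFDerivAt
    have hcomp := hF.comp_hasDerivAt 0 hline
    have hconst : HasDerivAt (fun t : ℝ => gradient (nnLoss σ c x y m) (θm + t • Jfun γ))
        (0 : NNParam din dout m) 0 := by
      have : (fun t : ℝ => gradient (nnLoss σ c x y m) (θm + t • Jfun γ))
          = fun _ => (0 : NNParam din dout m) := funext fun t => hlinecrit t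
      rw [this]
      exact hasDerivAt_const _ _
    have := hcomp.unique hconst
    exact LinearMap.mem_ker.mpr this
  -- Jmap is injective
  have hJinj : Function.Injective Jmap := by
    rw [← LinearMap.ker_eq_bot]
    refine LinearMap.ker_eq_bot'.mpr fun γ hγ => ?_
    funext i
    obtain ⟨o, hao⟩ := Function.ne_iff.mp (hirr.2 (g i))
    have h0 := congrArg (fun θ : NNParam din dout m => θ (i, Sum.inr o)) hγ
    simp only at h0
    have : γ i * aOf θr (g i) o = 0 := h0
    exact (mul_eq_zero.mp this).resolve_right hao
  -- Ssum is surjective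
  have hSsurj : Function.Surjective Ssum := by
    intro φ
    have hsec : ∀ t : Fin r, ∃ i, g i = t := fun t => hgsurj t
    choose sec hsec using hsec
    refine ⟨fun i => if sec (g i) = i then φ (g i) else 0, ?_⟩
    funext t
    show ∑ i ∈ Finset.univ.filter (fun i => g i = t), _ = φ t
    have h1 : ∑ i ∈ Finset.univ.filter (fun i => g i = t),
        (if sec (g i) = i then φ (g i) else 0)
        = ∑ i ∈ Finset.univ.filter (fun i => g i = t), (if sec t = i then φ t else 0) := by
      refine Finset.sum_congr rfl fun i hi => ?_
      rw [(Finset.mem_filter.mp hi).2]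
    rw [h1, Finset.sum_ite_eq]
    simp [hsec t]
  -- dimension count
  have hdim : Module.finrank ℝ (LinearMap.ker Ssum) = m - r := by
    have h1 := LinearMap.finrank_range_add_finrank_ker Ssum
    rw [LinearMap.range_eq_top.mpr hSsurj, finrank_top, Module.finrank_fin_fun,
      Module.finrank_fin_fun] at h1
    omega
  have hmapdim : Module.finrank ℝ ((LinearMap.ker Ssum).map Jmap) = m - r := by
    rw [← hdim]
    exact (LinearEquiv.finrank_eq
      ((LinearMap.ker Ssum).equivMapOfInjective Jmap hJinj)).symm
  calc m - r = Module.finrank ℝ ((LinearMap.ker Ssum).map Jmap) := hmapdim.symm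
    _ ≤ _ := Submodule.finrank_mono hker
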